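/- Let x, y, z ∈ ℝ^d and r > 0 with x, y ∈ B(z, r) (closed Euclidean ball). Then there exist signs ε₁,…,ε_d ∈ {-1, 1} such that the set { u ∈ B((x+y)/2, |x-y|/2) : ε_i (u_i - (x_i+y_i)/2) ≥ 0 for all i } is contained in B(z, r). -/

import Mathlib

open Metric Set

theorem stmt8 {d : ℕ} (x y z : EuclideanSpace ℝ (Fin d)) (r : ℝ) (hr : 0 < r)
    (hx : x ∈ Metric.closedBall z r) (hy : y ∈ Metric.closedBall z r) :
    ∃ ε : Fin d → ℝ, (∀ i, ε i = 1 ∨ ε i = -1) ∧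
      {u : EuclideanSpace ℝ (Fin d) |
          u ∈ Metric.closedBall ((1/2 : ℝ) • (x + y)) (‖x - y‖ / 2) ∧
          ∀ i, 0 ≤ ε i * (u i - ((1/2 : ℝ) • (x + y)) i)}
        ⊆ Metric.closedBall z r := by
  set m : EuclideanSpace ℝ (Fin d) := (1/2 : ℝ) • (x + y) with hm
  refine ⟨fun i => if m i - z i ≤ 0 then 1 else -1, fun i => by dsimp only; split <;> simp, ?_⟩
  rintro u ⟨hu1, hu2⟩
  have hx' : ‖x - z‖ ≤ r := by rwa [mem_closedBall, dist_eq_norm] at hx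
  have hy' : ‖y - z‖ ≤ r := by rwa [mem_closedBall, dist_eq_norm] at hy
  have hu1' : ‖u - m‖ ≤ ‖x - y‖ / 2 := by rwa [mem_closedBall, dist_eq_norm] at hu1
  have hip : (inner ℝ (u - m) (m - z) : ℝ) ≤ 0 := by
    rw [PiLp.inner_apply]
    apply Finset.sum_nonpos
    intro i _
    have h2 := hu2 i
    simp only [RCLike.inner_apply, conj_trivial, PiLp.sub_apply]
    rw [mul_comm]
    by_cases h : m i - z i ≤ 0
    · simp only [h, if_pos, one_mul] at h2
      exact mul_nonpos_of_nonneg_of_nonpos (by linarith) h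
    · simp only [h, if_neg, not_false_iff, neg_one_mul] at h2
      exact mul_nonpos_of_nonpos_of_nonneg (by linarith) (by linarith)
  have hb : ‖(1/2 : ℝ) • (x - y)‖ = ‖x - y‖ / 2 := by
    rw [norm_smul]; simp [abs_of_nonneg]; ring
  have hab : m - z + (1/2 : ℝ) • (x - y) = x - z := by
    rw [hm]; module
  have hab' : m - z - (1/2 : ℝ) • (x - y) = y - z := by
    rw [hm]; module
  have hpar := parallelogram_law_with_norm ℝ (m - z) ((1/2 : ℝ) • (x - y))
  rw [hab, hab'] at hpar
  have huz : u - z = (u - m) + (m - z) := by abel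
  have hexp : ‖u - z‖ ^ 2 = ‖u - m‖ ^ 2 + 2 * (inner ℝ (u - m) (m - z) : ℝ) + ‖m - z‖ ^ 2 := by
    rw [huz, norm_add_sq_real]
  have hnn := norm_nonneg (u - z)
  have hnn2 := norm_nonneg (u - m)
  have hnn3 := norm_nonneg (x - z)
  have hnn4 := norm_nonneg (y - z)
  have hsq : ‖u - z‖ ^ 2 ≤ r ^ 2 := by nlinarith [hb]
  rw [mem_closedBall, dist_eq_norm]
  nlinarith
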